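/- Let G=(V,E_L,E_R) be an achievement positional game and let u∈V with {u}∉E_L. If Left has a winning (resp. non-losing) strategy as second player on G, then Left has a winning (resp. non-losing) strategy as second player on the updated game G_u. -/

import Mathlib

namespace APG

/-- The two players: Left and Right. -/
inductive Player : Type
  | L : Player
  | R : Player
deriving DecidableEq, Repr

/-- The opponent of a player. -/
def Player.other : Player → Player
  | .L => .R
  | .R => .L

/-- An achievement positional game: a finite vertex set together with the set of
blue edges (Left's winning sets) and the set of red edges (Right's winning sets). -/
structure Game : Type where
  V : Finset ℕ
  EL : Finset (Finset ℕ)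
  ER : Finset (Finset ℕ)

/-- The edges are nonempty subsets of the vertex set. -/
def WellFormed (G : Game) : Prop :=
  (∀ e ∈ G.EL, e ⊆ G.V ∧ e.Nonempty) ∧ (∀ e ∈ G.ER, e ⊆ G.V ∧ e.Nonempty)

/-- The winning sets of a given player. -/
def Game.edges (G : Game) : Player → Finset (Finset ℕ)
  | .L => G.EL
  | .R => G.ER

/-- The player who makes the `i`-th move (0-indexed) when `s` moves first. -/
def mover (s : Player) (i : ℕ) : Player := if i % 2 = 0 then s else s.other

/-- The set of vertices picked by player `p` along the history `h`
(the chronological list of the moves played so far), when `s` moved first. -/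
def picked (s p : Player) (h : List ℕ) : Finset ℕ :=
  ((Finset.range h.length).filter fun i => mover s i = p).image fun i => h.getD i 0

/-- The set `S` of picked vertices fills some edge of `E`. -/
def fills (E : Finset (Finset ℕ)) (S : Finset ℕ) : Prop := ∃ e ∈ E, e ⊆ S

/-- The game is over: some player has picked all the vertices of one of their edges. -/
def ended (G : Game) (s : Player) (h : List ℕ) : Prop :=
  fills G.EL (picked s .L h) ∨ fills G.ER (picked s .R h)

/-- `h` is a legal history: no vertex is picked twice, every picked vertex belongs to
the board, and no move is made after the game has ended. -/
def ValidHist (G : Game) (s : Player) (h : List ℕ) : Prop :=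
  h.Nodup ∧ (∀ x ∈ h, x ∈ G.V) ∧ ∀ k, k < h.length → ¬ ended G s (h.take k)

/-- A strategy: a map assigning to each position (history) a vertex to pick. -/
abbrev Strategy := List ℕ → ℕ

/-- Along `h`, every move of player `p` agrees with the strategy `σ`. -/
def Follows (s p : Player) (σ : Strategy) (h : List ℕ) : Prop :=
  ∀ k, k < h.length → mover s k = p → h.getD k 0 = σ (h.take k)

/-- A finished play: either the game has ended or all vertices have been picked. -/
def Complete (G : Game) (s : Player) (h : List ℕ) : Prop :=
  ended G s h ∨ h.length = G.V.card

/-- The strategy `σ` of player `p` always suggests a legal move (an unpicked vertex)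
whenever the game is not over and it is `p`'s turn. -/
def Legal (G : Game) (s p : Player) (σ : Strategy) : Prop :=
  ∀ h, ValidHist G s h → Follows s p σ h → ¬ ended G s h → h.length < G.V.card →
    mover s h.length = p → σ h ∈ G.V ∧ σ h ∉ h

/-- Player `p` has a winning strategy on `G` when `s` moves first: following it,
every finished play ends with `p` having filled one of their edges (and, the game
having ended right there, the opponent has not filled an edge first). -/
def WinsAs (G : Game) (s p : Player) : Prop :=
  ∃ σ : Strategy, Legal G s p σ ∧
    ∀ h, ValidHist G s h → Follows s p σ h → Complete G s h →
      fills (G.edges p) (picked s p h)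

/-- Player `p` has a non-losing strategy on `G` when `s` moves first: following it,
the opponent never fills one of their edges. -/
def NonLosingAs (G : Game) (s p : Player) : Prop :=
  ∃ σ : Strategy, Legal G s p σ ∧
    ∀ h, ValidHist G s h → Follows s p σ h → Complete G s h →
      ¬ fills (G.edges p.other) (picked s p.other h)

/-- The possible results of the game, for a fixed starting player. -/
inductive Result : Type
  | Lwin : Result
  | draw : Result
  | Rwin : Result
deriving DecidableEq, Repr

/-- The result of `G` with optimal play, when `s` moves first, is `r`:
a win for a player means that player has a winning strategy, a draw means
both players have non-losing strategies. -/
def resultIs (G : Game) (s : Player) : Result → Prop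
  | .Lwin => WinsAs G s .L
  | .Rwin => WinsAs G s .R
  | .draw => NonLosingAs G s .L ∧ NonLosingAs G s .R

/-- An outcome: the pair of results with optimal play
(when Left starts, when Right starts). -/
abbrev Outcome := Result × Result

/-- `G` has outcome `o`. -/
def hasOutcome (G : Game) (o : Outcome) : Prop :=
  resultIs G .L o.1 ∧ resultIs G .R o.2

/-- Numerical value of a result, from Left's point of view:
Right wins < draw < Left wins. -/
def Result.val : Result → ℕ
  | .Rwin => 0
  | .draw => 1
  | .Lwin => 2

/-- The partial order `≤_L` on outcomes, comparing both components simultaneously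
from Left's point of view. -/
def outLE (o o' : Outcome) : Prop := o.1.val ≤ o'.1.val ∧ o.2.val ≤ o'.2.val

def oL : Outcome := (.Lwin, .Lwin)
def oLminus : Outcome := (.Lwin, .draw)
def oN : Outcome := (.Lwin, .Rwin)
def oD : Outcome := (.draw, .draw)
def oRminus : Outcome := (.draw, .Rwin)
def oR : Outcome := (.Rwin, .Rwin)

/-- The updated game `G_u` after Left has picked `u`. -/
def subL (G : Game) (u : ℕ) : Game where
  V := G.V.erase u
  EL := G.EL.image fun e => e.erase u
  ER := G.ER.filter fun e => u ∉ e

/-- The updated game `G^u` after Right has picked `u`. -/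
def subR (G : Game) (u : ℕ) : Game where
  V := G.V.erase u
  EL := G.EL.filter fun e => u ∉ e
  ER := G.ER.image fun e => e.erase u

/-- The updated game `G_u^v` after Left has picked `u` and Right has picked `v`. -/
def updLR (G : Game) (u v : ℕ) : Game where
  V := (G.V.erase u).erase v
  EL := (G.EL.filter fun e => v ∉ e).image fun e => e.erase u
  ER := (G.ER.filter fun e => u ∉ e).image fun e => e.erase v

/-- The disjoint union of two games. -/
def gunion (G G' : Game) : Game where
  V := G.V ∪ G'.V
  EL := G.EL ∪ G'.EL
  ER := G.ER ∪ G'.ER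

section Aux

lemma mem_picked {s p : Player} {h : List ℕ} {x : ℕ} :
    x ∈ picked s p h ↔ ∃ i, i < h.length ∧ mover s i = p ∧ h.getD i 0 = x := by
  simp only [picked, Finset.mem_image, Finset.mem_filter, Finset.mem_range]
  constructor
  · rintro ⟨i, ⟨hi, hm⟩, hg⟩; exact ⟨i, hi, hm, hg⟩
  · rintro ⟨i, hi, hm, hg⟩; exact ⟨i, ⟨hi, hm⟩, hg⟩

lemma picked_nil (s p : Player) : picked s p [] = ∅ := by
  simp [picked]

lemma picked_subset (s p : Player) (h : List ℕ) : picked s p h ⊆ h.toFinset := by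
  intro x hx
  rw [mem_picked] at hx
  obtain ⟨i, hi, _, hg⟩ := hx
  rw [List.getD_eq_getElem _ _ hi] at hg
  rw [List.mem_toFinset]
  exact hg ▸ List.getElem_mem _

lemma toFinset_eq_picked_union (s : Player) (h : List ℕ) :
    h.toFinset = picked s .L h ∪ picked s .R h := by
  apply subset_antisymm
  · intro x hx
    rw [List.mem_toFinset, List.mem_iff_getElem] at hx
    obtain ⟨i, hi, hg⟩ := hx
    rw [Finset.mem_union, mem_picked, mem_picked]
    cases hm : mover s i with
    | L => exact Or.inl ⟨i, hi, hm, by rw [List.getD_eq_getElem _ _ hi]; exact hg⟩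
    | R => exact Or.inr ⟨i, hi, hm, by rw [List.getD_eq_getElem _ _ hi]; exact hg⟩
  · exact Finset.union_subset (picked_subset _ _ _) (picked_subset _ _ _)

lemma getD_snoc (h : List ℕ) (a : ℕ) : (h ++ [a]).getD h.length 0 = a := by
  simp [List.getD]

lemma picked_snoc (s p : Player) (h : List ℕ) (a : ℕ) :
    picked s p (h ++ [a]) =
      if mover s h.length = p then insert a (picked s p h) else picked s p h := by
  ext x
  rw [mem_picked]
  constructor
  · rintro ⟨i, hi, hm, hg⟩
    rw [List.length_append, List.length_singleton, Nat.lt_succ_iff_lt_or_eq] at hi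
    rcases hi with hi | rfl
    · rw [List.getD_append _ _ _ _ hi] at hg
      have hx : x ∈ picked s p h := mem_picked.2 ⟨i, hi, hm, hg⟩
      split <;> simp [hx]
    · rw [getD_snoc] at hg
      rw [if_pos hm]
      simp [hg.symm]
  · intro hx
    split at hx
    case isTrue hm =>
      rcases Finset.mem_insert.1 hx with rfl | hx
      · exact ⟨h.length, by simp, hm, getD_snoc h x⟩
      · obtain ⟨i, hi, hm', hg⟩ := mem_picked.1 hx
        exact ⟨i, by simp only [List.length_append, List.length_singleton]; omega, hm',
          by rw [List.getD_append _ _ _ _ hi]; exact hg⟩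
    case isFalse =>
      obtain ⟨i, hi, hm', hg⟩ := mem_picked.1 hx
      exact ⟨i, by simp only [List.length_append, List.length_singleton]; omega, hm',
        by rw [List.getD_append _ _ _ _ hi]; exact hg⟩

lemma validHist_snoc {G : Game} {s : Player} {h : List ℕ} {a : ℕ}
    (hv : ValidHist G s (h ++ [a])) :
    ValidHist G s h ∧ ¬ ended G s h ∧ a ∉ h ∧ a ∈ G.V := by
  obtain ⟨hnd, hmem, hend⟩ := hv
  have hlen : h.length < (h ++ [a]).length := by simp
  have hende : ¬ ended G s h := by
    have := hend h.length hlen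
    rwa [List.take_append_of_le_length le_rfl, List.take_length] at this
  have hnd' := List.nodup_append.1 hnd
  refine ⟨⟨hnd'.1, fun x hx => hmem x (by simp [hx]), ?_⟩, hende, ?_, hmem a (by simp)⟩
  · intro k hk
    have := hend k (by simp only [List.length_append, List.length_singleton]; omega)
    rwa [List.take_append_of_le_length (le_of_lt hk)] at this
  · intro ha
    exact hnd'.2.2 a ha a (by simp) rfl

lemma validHist_snoc_of {G : Game} {s : Player} {h : List ℕ} {a : ℕ}
    (hv : ValidHist G s h) (hne : ¬ ended G s h) (ha : a ∉ h) (haV : a ∈ G.V) :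
    ValidHist G s (h ++ [a]) := by
  refine ⟨?_, ?_, ?_⟩
  · rw [List.nodup_append]
    refine ⟨hv.1, List.nodup_singleton a, ?_⟩
    intro x hx y hy hxy
    rw [List.mem_singleton] at hy
    subst hy; subst hxy; exact ha hx
  · intro x hx
    rcases List.mem_append.1 hx with hx | hx
    · exact hv.2.1 x hx
    · rw [List.mem_singleton] at hx; exact hx ▸ haV
  · intro k hk
    rw [List.length_append, List.length_singleton, Nat.lt_succ_iff_lt_or_eq] at hk
    rcases hk with hk | rfl
    · rw [List.take_append_of_le_length (le_of_lt hk)]; exact hv.2.2 k hk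
    · rw [List.take_append_of_le_length le_rfl, List.take_length]; exact hne

lemma follows_snoc {s p : Player} {σ : Strategy} {h : List ℕ} {a : ℕ}
    (hf : Follows s p σ (h ++ [a])) : Follows s p σ h := by
  intro k hk hm
  have := hf k (by simp only [List.length_append, List.length_singleton]; omega) hm
  rwa [List.getD_append _ _ _ _ hk, List.take_append_of_le_length (le_of_lt hk)] at this

lemma follows_snoc_of {s p : Player} {σ : Strategy} {h : List ℕ} {a : ℕ}
    (hf : Follows s p σ h) (ha : mover s h.length = p → a = σ h) :
    Follows s p σ (h ++ [a]) := by
  intro k hk hm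
  rw [List.length_append, List.length_singleton, Nat.lt_succ_iff_lt_or_eq] at hk
  rcases hk with hk | rfl
  · rw [List.getD_append _ _ _ _ hk, List.take_append_of_le_length (le_of_lt hk)]
    exact hf k hk hm
  · rw [List.take_append_of_le_length le_rfl, List.take_length, getD_snoc]
    exact ha hm

lemma validHist_length_le {G : Game} {s : Player} {h : List ℕ}
    (hv : ValidHist G s h) : h.length ≤ G.V.card := by
  rw [← List.toFinset_card_of_nodup hv.1]
  exact Finset.card_le_card (fun x hx => hv.2.1 x (List.mem_toFinset.1 hx))

lemma mover_R_of_even {k : ℕ} (hk : k % 2 = 0) : mover .R k = .R := by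
  simp [mover, hk]

lemma mover_L_of_odd {k : ℕ} (hk : k % 2 = 1) : mover .R k = .L := by
  simp [mover, hk, Player.other]

/-- The simulated history: `simA σ h n` is the simulated play after `n` moves of the
real play `h`: Right's moves are copied, Left's moves are given by `σ`. -/
def simA (σ : Strategy) (h : List ℕ) : ℕ → List ℕ
  | 0 => []
  | n+1 => simA σ h n ++ [if n % 2 = 0 then h.getD n 0 else σ (simA σ h n)]

def sim (σ : Strategy) (h : List ℕ) : List ℕ := simA σ h h.length

lemma simA_length (σ : Strategy) (h : List ℕ) : ∀ n, (simA σ h n).length = n := by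
  intro n
  induction n with
  | zero => rfl
  | succ n ih => simp [simA, ih]

lemma simA_snoc (σ : Strategy) (h : List ℕ) (a : ℕ) :
    ∀ n, n ≤ h.length → simA σ (h ++ [a]) n = simA σ h n := by
  intro n
  induction n with
  | zero => intro _; rfl
  | succ n ih =>
    intro hn
    have h1 := ih (by omega)
    simp only [simA, h1, List.getD_append _ _ _ _ (by omega : n < h.length)]

lemma sim_length (σ : Strategy) (h : List ℕ) : (sim σ h).length = h.length :=
  simA_length σ h h.length

lemma sim_snoc (σ : Strategy) (h : List ℕ) (a : ℕ) :
    sim σ (h ++ [a]) = sim σ h ++ [if h.length % 2 = 0 then a else σ (sim σ h)] := by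
  have e1 : simA σ (h ++ [a]) h.length = simA σ h h.length := simA_snoc σ h a _ le_rfl
  show simA σ (h ++ [a]) (h ++ [a]).length = _
  rw [List.length_append, List.length_singleton]
  show simA σ (h ++ [a]) h.length ++ _ = _
  rw [e1, getD_snoc]
  rfl

/-- Left's strategy on the updated game: play what `σ` suggests in the simulated game
if possible, otherwise play an arbitrary fresh vertex. -/
def tauStrat (σ : Strategy) (W : Finset ℕ) : Strategy := fun h =>
  if σ (sim σ h) ∈ W ∧ σ (sim σ h) ∉ h then σ (sim σ h)
  else if hne : (W \ h.toFinset).Nonempty then (W \ h.toFinset).min' hne else 0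

lemma ended_map {G : Game} {u : ℕ} {h H : List ℕ}
    (hmem : ∀ x ∈ h, x ∈ (subL G u).V)
    (pR : picked .R .R H = picked .R .R h)
    (pL : picked .R .L H ⊆ picked .R .L h ∪ {u})
    (hE : ended G .R H) : ended (subL G u) .R h := by
  rcases hE with ⟨e, he, hsub⟩ | ⟨e, he, hsub⟩
  · left
    refine ⟨e.erase u, Finset.mem_image_of_mem _ he, fun x hx => ?_⟩
    rw [Finset.mem_erase] at hx
    rcases Finset.mem_union.1 (pL (hsub hx.2)) with h1 | h1
    · exact h1
    · exact absurd (Finset.mem_singleton.1 h1) hx.1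
  · right
    have hu_not : u ∉ picked .R .R h := by
      intro hc
      have := hmem u (List.mem_toFinset.1 (picked_subset _ _ _ hc))
      simp [subL] at this
    refine ⟨e, Finset.mem_filter.2 ⟨he, fun hue => hu_not (pR ▸ hsub hue)⟩, pR ▸ hsub⟩

end Aux

lemma sim_invariant (G : Game) (u : ℕ) (hu : u ∈ G.V) (σ : Strategy)
    (hleg : Legal G .R .L σ) :
    ∀ h : List ℕ, ValidHist (subL G u) .R h →
      Follows .R .L (tauStrat σ (G.V.erase u)) h →
      ValidHist G .R (sim σ h) ∧ Follows .R .L σ (sim σ h) ∧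
      picked .R .R (sim σ h) = picked .R .R h ∧
      picked .R .L (sim σ h) ⊆ picked .R .L h ∪ {u} := by
  intro h
  induction h using List.reverseRecOn with
  | nil =>
    intro _ _
    refine ⟨⟨by simp [sim, simA], fun x hx => by simp [sim, simA] at hx,
      fun k hk => by simp [sim, simA] at hk⟩,
      fun k hk => by simp [sim, simA] at hk, by simp [sim, simA], by simp [sim, simA]⟩
  | append_singleton t a ih =>
    intro hv hf
    obtain ⟨hvt, hnet, hat, haV'⟩ := validHist_snoc hv
    have hft := follows_snoc hf
    obtain ⟨HV, HF, HR, HL⟩ := ih hvt hft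
    have Hne : ¬ ended G .R (sim σ t) := fun hE =>
      hnet (ended_map (fun x hx => hvt.2.1 x hx) HR HL hE)
    have hlenH : (sim σ t).length = t.length := sim_length σ t
    have haV : a ∈ G.V := (Finset.mem_erase.1 haV').2
    have hau : a ≠ u := (Finset.mem_erase.1 haV').1
    rcases Nat.mod_two_eq_zero_or_one t.length with hpar | hpar
    · -- Right's move
      have hsnoc : sim σ (t ++ [a]) = sim σ t ++ [a] := by rw [sim_snoc, if_pos hpar]
      have hmR : mover .R t.length = .R := mover_R_of_even hpar
      have haH : a ∉ sim σ t := by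
        intro haH
        have h0 : a ∈ (sim σ t).toFinset := List.mem_toFinset.2 haH
        rw [toFinset_eq_picked_union .R] at h0
        rcases Finset.mem_union.1 h0 with h1 | h1
        · rcases Finset.mem_union.1 (HL h1) with h2 | h2
          · exact hat (List.mem_toFinset.1 (picked_subset _ _ _ h2))
          · exact hau (Finset.mem_singleton.1 h2)
        · rw [HR] at h1
          exact hat (List.mem_toFinset.1 (picked_subset _ _ _ h1))
      rw [hsnoc]
      refine ⟨validHist_snoc_of HV Hne haH haV, ?_, ?_, ?_⟩
      · refine follows_snoc_of HF (fun hm => ?_)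
        rw [hlenH, hmR] at hm
        cases hm
      · rw [picked_snoc, picked_snoc, hlenH, if_pos hmR, if_pos hmR, HR]
      · rw [picked_snoc, picked_snoc, hlenH, if_neg (by rw [hmR]; intro h0; cases h0),
          if_neg (by rw [hmR]; intro h0; cases h0)]
        exact HL
    · -- Left's move
      have hmL : mover .R t.length = .L := mover_L_of_odd hpar
      have hbound : (sim σ t).length < G.V.card := by
        have hb := validHist_length_le hv
        have hc : (subL G u).V.card = G.V.card - 1 := by
          simp [subL, Finset.card_erase_of_mem hu]
        have hpos : 1 ≤ G.V.card := Finset.card_pos.2 ⟨u, hu⟩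
        rw [List.length_append, List.length_singleton, hc] at hb
        omega
      obtain ⟨hxV, hxH⟩ := hleg (sim σ t) HV HF Hne hbound (by rw [hlenH]; exact hmL)
      have hsnoc : sim σ (t ++ [a]) = sim σ t ++ [σ (sim σ t)] := by
        rw [sim_snoc, if_neg (by omega)]
      have key : σ (sim σ t) ∈ insert a (picked .R .L t) ∪ {u} := by
        have ha : a = tauStrat σ (G.V.erase u) t := by
          have h0 := hf t.length (by simp) hmL
          rwa [List.take_append_of_le_length le_rfl, List.take_length, getD_snoc] at h0
        by_cases hcond : σ (sim σ t) ∈ G.V.erase u ∧ σ (sim σ t) ∉ t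
        · have hax : a = σ (sim σ t) := by
            rw [ha]; simp only [tauStrat]; rw [if_pos hcond]
          exact Finset.mem_union_left _ (hax ▸ Finset.mem_insert_self _ _)
        · push_neg at hcond
          by_cases hxu : σ (sim σ t) ∈ G.V.erase u
          · have hxt := hcond hxu
            have h0 : σ (sim σ t) ∈ t.toFinset := List.mem_toFinset.2 hxt
            rw [toFinset_eq_picked_union .R] at h0
            rcases Finset.mem_union.1 h0 with h1 | h1
            · exact Finset.mem_union_left _ (Finset.mem_insert_of_mem h1)
            · exfalso
              rw [← HR] at h1
              exact hxH (List.mem_toFinset.1 (picked_subset _ _ _ h1))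
          · have : σ (sim σ t) = u := by
              by_contra hne
              exact hxu (Finset.mem_erase.2 ⟨hne, hxV⟩)
            exact Finset.mem_union_right _ (this ▸ Finset.mem_singleton_self _)
      rw [hsnoc]
      refine ⟨validHist_snoc_of HV Hne hxH hxV, follows_snoc_of HF (fun _ => rfl), ?_, ?_⟩
      · rw [picked_snoc, picked_snoc, hlenH, if_neg (by rw [hmL]; intro h0; cases h0),
          if_neg (by rw [hmL]; intro h0; cases h0)]
        exact HR
      · rw [picked_snoc, picked_snoc, hlenH, if_pos hmL, if_pos hmL]
        intro y hy
        rcases Finset.mem_insert.1 hy with rfl | hy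
        · exact key
        · rcases Finset.mem_union.1 (HL hy) with h1 | h1
          · exact Finset.mem_union_left _ (Finset.mem_insert_of_mem h1)
          · exact Finset.mem_union_right _ h1

lemma tau_legal (G : Game) (u : ℕ) (hu : u ∈ G.V) (σ : Strategy) :
    Legal (subL G u) .R .L (tauStrat σ (G.V.erase u)) := by
  intro h hv _ _ hlen _
  have hfresh : ((G.V.erase u) \ h.toFinset).Nonempty := by
    rw [Finset.sdiff_nonempty]
    intro hWs
    have h0 := Finset.card_le_card hWs
    rw [List.toFinset_card_of_nodup hv.1] at h0
    have : h.length < (G.V.erase u).card := hlen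
    omega
  by_cases hcond : σ (sim σ h) ∈ G.V.erase u ∧ σ (sim σ h) ∉ h
  · have : tauStrat σ (G.V.erase u) h = σ (sim σ h) := by
      simp only [tauStrat]; rw [if_pos hcond]
    rw [this]
    exact ⟨hcond.1, hcond.2⟩
  · have : tauStrat σ (G.V.erase u) h = ((G.V.erase u) \ h.toFinset).min' hfresh := by
      simp only [tauStrat]; rw [if_neg hcond, dif_pos hfresh]
    rw [this]
    have hm := Finset.min'_mem _ hfresh
    rw [Finset.mem_sdiff] at hm
    exact ⟨hm.1, fun hc => hm.2 (List.mem_toFinset.2 hc)⟩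

lemma tau_wins (G : Game) (u : ℕ) (hu : u ∈ G.V) (σ : Strategy)
    (hleg : Legal G .R .L σ)
    (hwin : ∀ h, ValidHist G .R h → Follows .R .L σ h → Complete G .R h →
      fills (G.edges .L) (picked .R .L h)) :
    ∀ h, ValidHist (subL G u) .R h → Follows .R .L (tauStrat σ (G.V.erase u)) h →
      Complete (subL G u) .R h → fills ((subL G u).edges .L) (picked .R .L h) := by
  intro h hv hf hc
  obtain ⟨HV, HF, HR, HL⟩ := sim_invariant G u hu σ hleg h hv hf
  have key : ∀ S : Finset ℕ, S ⊆ picked .R .L h ∪ {u} → fills G.EL S →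
      fills ((subL G u).edges .L) (picked .R .L h) := by
    rintro S hS ⟨e, he, hsub⟩
    refine ⟨e.erase u, Finset.mem_image_of_mem _ he, fun x hx => ?_⟩
    rw [Finset.mem_erase] at hx
    rcases Finset.mem_union.1 (hS (hsub hx.2)) with h1 | h1
    · exact h1
    · exact absurd (Finset.mem_singleton.1 h1) hx.1
  by_cases hE : ended G .R (sim σ h)
  · exact key _ HL (hwin _ HV HF (Or.inl hE))
  · rcases hc with hend | hfull
    · rcases hend with hfl | hfr
      · exact hfl
      · exfalso
        apply hE
        right
        obtain ⟨e, he, hsub⟩ := hfr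
        exact ⟨e, (Finset.mem_filter.1 he).1, HR ▸ hsub⟩
    · have hlenH : (sim σ h).length = h.length := sim_length σ h
      have hposV : 1 ≤ G.V.card := Finset.card_pos.2 ⟨u, hu⟩
      have hcard : h.length = G.V.card - 1 := by
        rw [hfull]; simp [subL, Finset.card_erase_of_mem hu]
      have hltV : (sim σ h).length < G.V.card := by rw [hlenH]; omega
      have htf : h.toFinset = G.V.erase u := by
        apply Finset.eq_of_subset_of_card_le
        · exact fun x hx => hv.2.1 x (List.mem_toFinset.1 hx)
        · rw [List.toFinset_card_of_nodup hv.1]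
          have h1 : h.length = (subL G u).V.card := hfull
          rw [h1]
          exact le_rfl
      have hmiss : ∀ m, m ∈ G.V → m ∉ sim σ h → m ∈ picked .R .L h ∪ {u} := by
        intro m hmV hmH
        by_cases hmu : m = u
        · exact Finset.mem_union_right _ (hmu ▸ Finset.mem_singleton_self _)
        · have h0 : m ∈ h.toFinset := htf ▸ Finset.mem_erase.2 ⟨hmu, hmV⟩
          rw [toFinset_eq_picked_union .R] at h0
          rcases Finset.mem_union.1 h0 with h1 | h1
          · exact Finset.mem_union_left _ h1
          · exfalso
            apply hmH
            rw [← HR] at h1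
            exact List.mem_toFinset.1 (picked_subset _ _ _ h1)
      have hcomplen : ∀ b : ℕ, (sim σ h ++ [b]).length = G.V.card := by
        intro b
        rw [List.length_append, List.length_singleton, hlenH]
        omega
      rcases Nat.mod_two_eq_zero_or_one (sim σ h).length with hpar | hpar
      · -- Right's turn in the simulation: append any missing vertex
        have hex : ∃ m, m ∈ G.V ∧ m ∉ sim σ h := by
          have h0 : ¬ G.V ⊆ (sim σ h).toFinset := by
            intro hGs
            have := Finset.card_le_card hGs
            rw [List.toFinset_card_of_nodup HV.1] at this
            omega
          obtain ⟨m, hm1, hm2⟩ := Finset.not_subset.1 h0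
          exact ⟨m, hm1, fun hcm => hm2 (List.mem_toFinset.2 hcm)⟩
        obtain ⟨m, hmV, hmH⟩ := hex
        have HV' := validHist_snoc_of HV hE hmH hmV
        have HF' : Follows .R .L σ (sim σ h ++ [m]) :=
          follows_snoc_of HF (fun hm => by rw [mover_R_of_even hpar] at hm; cases hm)
        have hres := hwin _ HV' HF' (Or.inr (hcomplen m))
        have : picked .R .L (sim σ h ++ [m]) = picked .R .L (sim σ h) := by
          rw [picked_snoc, if_neg (by rw [mover_R_of_even hpar]; intro h0; cases h0)]
        rw [this] at hres
        exact key _ HL hres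
      · -- Left's turn in the simulation
        have hmL : mover .R (sim σ h).length = .L := mover_L_of_odd hpar
        obtain ⟨hxV, hxH⟩ := hleg _ HV HF hE hltV hmL
        have HV' := validHist_snoc_of HV hE hxH hxV
        have HF' := follows_snoc_of HF (fun _ => rfl)
        have hres := hwin _ HV' HF' (Or.inr (hcomplen _))
        rw [picked_snoc, if_pos hmL] at hres
        refine key _ ?_ hres
        intro y hy
        rcases Finset.mem_insert.1 hy with rfl | hy
        · exact hmiss _ hxV hxH
        · exact HL hy

lemma tau_nonlosing (G : Game) (u : ℕ) (hu : u ∈ G.V) (σ : Strategy)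
    (hleg : Legal G .R .L σ)
    (hnl : ∀ h, ValidHist G .R h → Follows .R .L σ h → Complete G .R h →
      ¬ fills (G.edges Player.L.other) (picked .R Player.L.other h)) :
    ∀ h, ValidHist (subL G u) .R h → Follows .R .L (tauStrat σ (G.V.erase u)) h →
      Complete (subL G u) .R h →
      ¬ fills ((subL G u).edges Player.L.other) (picked .R Player.L.other h) := by
  intro h hv hf _ hfill
  obtain ⟨HV, HF, HR, _⟩ := sim_invariant G u hu σ hleg h hv hf
  obtain ⟨e, he, hsub⟩ := hfill
  have heER : e ∈ G.ER := (Finset.mem_filter.1 he).1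
  have hsub' : e ⊆ picked .R .R (sim σ h) := HR ▸ hsub
  exact hnl _ HV HF (Or.inl (Or.inr ⟨e, heER, hsub'⟩)) ⟨e, heER, hsub'⟩

/-- If Left has a winning (resp. non-losing) strategy as second player on `G`,
then Left has a winning (resp. non-losing) strategy as second player on `G_u`. -/
theorem updated_game_second_player (G : Game) (hG : WellFormed G) (u : ℕ)
    (hu : u ∈ G.V) (hu' : ({u} : Finset ℕ) ∉ G.EL) :
    (WinsAs G .R .L → WinsAs (subL G u) .R .L) ∧
    (NonLosingAs G .R .L → NonLosingAs (subL G u) .R .L) := by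
  constructor
  · rintro ⟨σ, hleg, hwin⟩
    exact ⟨tauStrat σ (G.V.erase u), tau_legal G u hu σ, tau_wins G u hu σ hleg hwin⟩
  · rintro ⟨σ, hleg, hnl⟩
    exact ⟨tauStrat σ (G.V.erase u), tau_legal G u hu σ, tau_nonlosing G u hu σ hleg hnl⟩
end APG
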